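/- Let d_in ≥ 1 and let X ⊂ ℝ^{d_in} be a finite set. Let 0 < Δ ≤ (1/10)·min(1, g_X), where g_X is the minimum of |u − u'| over distinct values u, u' occurring in the same coordinate of points of X. Fix x₀ ∈ X, a value c ∈ ℝ, and γ₁,…,γ_{d_in} ∈ ℝ. For each i ∈ {1,…,d_in} and b ∈ {0,1}, let ψ_i^{(b)} : ℝ → ℝ be any differentiable function such that, for every real u occurring as the i-th coordinate of some point of X, ψ_i^{(b)}(u) = 1 if u = (x₀)_i and ψ_i^{(b)}(u) = 0 otherwise, and (ψ_i^{(b)})'(u) = b if u = (x₀)_i and 0 otherwise. For each i' ∈ {1,…,d_in}, let τ_{i'} : ℝ → ℝ be any differentiable function with τ_{i'}(u) = 0 and τ_{i'}'(u) = 0 for all u ≤ d_in − 2Δ, and τ_{i'}(u) = c·1[i' = 1] + γ_{i'}·(u − d_in) for all u ≥ d_in − Δ. Define Ψ(x) := Σ_{i'=1}^{d_in} τ_{i'}( Σ_{i=1}^{d_in} ψ_i^{(1[i=i'])}(x_i) ). Then for every x ∈ X: Ψ(x) = c if x = x₀ and Ψ(x) = 0 otherwise; moreover Ψ is differentiable at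 every x ∈ X with ∂Ψ/∂x_i (x) = γ_i·1[x = x₀] for every i ∈ {1,…,d_in}. -/

import Mathlib

/-- multivariate indicator with prescribed gradient, assembled from
univariate indicators `ψ` and thresholds `τ`: the function
`Ψ(x) = Σ_{i'} τ_{i'}( Σ_i ψ_i^{(1[i=i'])}(x_i) )` equals `c·1[x = x₀]` on `X` and has
partial derivatives `∂Ψ/∂x_i (x) = γ_i·1[x = x₀]` at every `x ∈ X`. -/
theorem statement3 (din : ℕ) (hdin : 1 ≤ din)
    (X : Finset (Fin din → ℝ))
    (Δ : ℝ) (hΔ0 : 0 < Δ) (hΔ1 : Δ ≤ 1 / 10)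
    (hΔgap : ∀ x ∈ X, ∀ x' ∈ X, ∀ i : Fin din, x i ≠ x' i → Δ ≤ |x i - x' i| / 10)
    (x₀ : Fin din → ℝ) (hx₀ : x₀ ∈ X)
    (c : ℝ) (γ : Fin din → ℝ)
    (ψ : Fin din → Bool → ℝ → ℝ)
    (hψdiff : ∀ (i : Fin din) (bb : Bool), Differentiable ℝ (ψ i bb))
    (hψval : ∀ (i : Fin din) (bb : Bool), ∀ x ∈ X,
      ψ i bb (x i) = if x i = x₀ i then 1 else 0)
    (hψder : ∀ (i : Fin din) (bb : Bool), ∀ x ∈ X,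
      deriv (ψ i bb) (x i) = if x i = x₀ i then (if bb then (1 : ℝ) else 0) else 0)
    (τ : Fin din → ℝ → ℝ)
    (hτdiff : ∀ i' : Fin din, Differentiable ℝ (τ i'))
    (hτ0 : ∀ i' : Fin din, ∀ u : ℝ, u ≤ (din : ℝ) - 2 * Δ →
      τ i' u = 0 ∧ deriv (τ i') u = 0)
    (hτ1 : ∀ i' : Fin din, ∀ u : ℝ, (din : ℝ) - Δ ≤ u →
      τ i' u = (if i' = (⟨0, hdin⟩ : Fin din) then c else 0) + γ i' * (u - din)) :
    ∀ Ψ : (Fin din → ℝ) → ℝ,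
      Ψ = (fun x => ∑ i' : Fin din, τ i' (∑ i : Fin din, ψ i (decide (i = i')) (x i))) →
      (∀ x ∈ X, Ψ x = if x = x₀ then c else 0) ∧
      (∀ x ∈ X, DifferentiableAt ℝ Ψ x ∧
        ∀ i : Fin din, fderiv ℝ Ψ x (Pi.single i 1) = if x = x₀ then γ i else 0) := by
  intro Ψ hΨdef
  subst hΨdef
  have hΔ2 : 2 * Δ ≤ 1 := by linarith
  -- the inner sums equal the number of matching coordinates
  have hScard : ∀ x ∈ X, ∀ i' : Fin din,
      (∑ i, ψ i (decide (i = i')) (x i))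
        = ((Finset.univ.filter (fun i => x i = x₀ i)).card : ℝ) := by
    intro x hx i'
    rw [Finset.sum_congr rfl (fun i _ => hψval i _ x hx)]
    simp [Finset.sum_boole]
  have hSx0 : ∀ i' : Fin din, (∑ i, ψ i (decide (i = i')) (x₀ i)) = (din : ℝ) := by
    intro i'
    rw [hScard x₀ hx₀ i']
    simp
  have hSne : ∀ x ∈ X, x ≠ x₀ → ∀ i' : Fin din,
      (∑ i, ψ i (decide (i = i')) (x i)) ≤ (din : ℝ) - 2 * Δ := by
    intro x hx hne i'
    obtain ⟨i₀, hi₀⟩ : ∃ i, x i ≠ x₀ i := by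
      by_contra h; push_neg at h; exact hne (funext h)
    rw [hScard x hx i']
    have hcard : (Finset.univ.filter (fun i => x i = x₀ i)).card ≤ din - 1 := by
      have hsub : Finset.univ.filter (fun i => x i = x₀ i) ⊆ Finset.univ.erase i₀ := by
        intro j hj
        rw [Finset.mem_erase]
        refine ⟨?_, Finset.mem_univ j⟩
        rintro rfl
        exact hi₀ (Finset.mem_filter.mp hj).2
      calc (Finset.univ.filter (fun i => x i = x₀ i)).card
          ≤ (Finset.univ.erase i₀).card := Finset.card_le_card hsub
        _ = din - 1 := by
            rw [Finset.card_erase_of_mem (Finset.mem_univ i₀)]; simp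
    have hc : ((Finset.univ.filter (fun i => x i = x₀ i)).card : ℝ) ≤ ((din - 1 : ℕ) : ℝ) :=
      Nat.cast_le.mpr hcard
    rw [Nat.cast_sub hdin] at hc
    push_cast at hc
    linarith
  -- derivative of τ at din
  have hτder1 : ∀ i' : Fin din, deriv (τ i') (din : ℝ) = γ i' := by
    intro i'
    have hev : τ i' =ᶠ[nhds (din : ℝ)]
        fun v => (if i' = (⟨0, hdin⟩ : Fin din) then c else 0) + γ i' * (v - din) := by
      filter_upwards [Ioi_mem_nhds (show (din : ℝ) - Δ < din by linarith)] with v hv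
      exact hτ1 i' v hv.le
    rw [hev.deriv_eq]
    have h1 : HasDerivAt (fun v : ℝ => v - (din : ℝ)) 1 (din : ℝ) :=
      (hasDerivAt_id _).sub_const _
    have h2 : HasDerivAt
        (fun v : ℝ => (if i' = (⟨0, hdin⟩ : Fin din) then c else 0) + γ i' * (v - din))
        (γ i') (din : ℝ) := by
      simpa using (h1.const_mul (γ i')).const_add
        (if i' = (⟨0, hdin⟩ : Fin din) then c else 0)
    exact h2.deriv
  -- total derivative of Ψ everywhere
  have hfd : ∀ x : Fin din → ℝ,
      HasFDerivAt (fun x => ∑ i' : Fin din, τ i' (∑ i : Fin din, ψ i (decide (i = i')) (x i)))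
        (∑ i' : Fin din, deriv (τ i') (∑ i, ψ i (decide (i = i')) (x i)) •
          (∑ i : Fin din, deriv (ψ i (decide (i = i'))) (x i) •
            (ContinuousLinearMap.proj i : (Fin din → ℝ) →L[ℝ] ℝ))) x := by
    intro x
    refine HasFDerivAt.fun_sum fun i' _ => ?_
    have hinner : HasFDerivAt (fun y : Fin din → ℝ => ∑ i, ψ i (decide (i = i')) (y i))
        (∑ i : Fin din, deriv (ψ i (decide (i = i'))) (x i) •
          (ContinuousLinearMap.proj i : (Fin din → ℝ) →L[ℝ] ℝ)) x := by
      refine HasFDerivAt.fun_sum fun i _ => ?_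
      exact ((hψdiff i _ (x i)).hasDerivAt).comp_hasFDerivAt x
        ((ContinuousLinearMap.proj (R := ℝ) (φ := fun _ : Fin din => ℝ) i).hasFDerivAt)
    exact ((hτdiff i' (∑ i, ψ i (decide (i = i')) (x i))).hasDerivAt).comp_hasFDerivAt x hinner
  constructor
  · -- values
    intro x hx
    by_cases h : x = x₀
    · subst h
      simp only [if_pos rfl]
      have hterm : ∀ i' : Fin din,
          τ i' (∑ i, ψ i (decide (i = i')) (x i))
            = if i' = (⟨0, hdin⟩ : Fin din) then c else 0 := by
        intro i'
        rw [hSx0 i', hτ1 i' din (by linarith)]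
        ring_nf
      rw [Finset.sum_congr rfl fun i' _ => hterm i']
      simp
    · simp only [if_neg h]
      exact Finset.sum_eq_zero fun i' _ => (hτ0 i' _ (hSne x hx h i')).1
  · -- derivatives
    intro x hx
    refine ⟨(hfd x).differentiableAt, fun i => ?_⟩
    rw [(hfd x).fderiv]
    simp only [ContinuousLinearMap.coe_sum', Finset.sum_apply,
      ContinuousLinearMap.coe_smul', Pi.smul_apply, ContinuousLinearMap.proj_apply,
      smul_eq_mul]
    by_cases h : x = x₀
    · subst h
      simp only [if_pos rfl]
      have hterm : ∀ i' : Fin din,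
          deriv (τ i') (∑ j, ψ j (decide (j = i')) (x j)) *
            (∑ j : Fin din, deriv (ψ j (decide (j = i'))) (x j) * (Pi.single i 1 : Fin din → ℝ) j)
            = if i' = i then γ i' else 0 := by
        intro i'
        rw [hSx0 i', hτder1 i']
        have hj : ∀ j : Fin din,
            deriv (ψ j (decide (j = i'))) (x j) * (Pi.single i 1 : Fin din → ℝ) j
              = if j = i' then (Pi.single i 1 : Fin din → ℝ) j else 0 := by
          intro j
          rw [hψder j _ x hx]
          by_cases hji : j = i' <;> simp [hji]
        rw [Finset.sum_congr rfl fun j _ => hj j, Finset.sum_ite_eq']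
        by_cases hii : i' = i
        · subst hii; simp
        · simp [Pi.single_apply, hii, Ne.symm hii]
      rw [Finset.sum_congr rfl fun i' _ => hterm i', Finset.sum_ite_eq']
      simp
    · simp only [if_neg h]
      refine Finset.sum_eq_zero fun i' _ => ?_
      rw [(hτ0 i' _ (hSne x hx h i')).2, zero_mul]
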